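/- Let A be a finite connected subset of Z^d and let A-bar be the union of A with all its holes. Then Π(A-bar) equals the set of all plaquettes dual to edges having exactly one endvertex in A-bar. -/

import Mathlib

open Set Relation Filter

/-- Vertices of the lattice `ℤ^d`. -/
abbrev V (d : ℕ) := Fin d → ℤ

/-- Nearest-neighbour adjacency in `ℤ^d`: `x` and `y` differ by `1` in exactly
one coordinate. -/
def latAdj {d : ℕ} (x y : V d) : Prop :=
  ∃ i, (x i - y i).natAbs = 1 ∧ ∀ j, j ≠ i → x j = y j

/-- Connectivity in the complement of `S` (paths avoiding `S`). -/
def connAvoid {d : ℕ} (S : Set (V d)) (a b : V d) : Prop :=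
  ReflTransGen (fun u v => latAdj u v ∧ u ∉ S ∧ v ∉ S) a b

/-- The connected component of `w` in the complement of `S`. -/
def compOff {d : ℕ} (S : Set (V d)) (w : V d) : Set (V d) :=
  {z | connAvoid S w z}

/-- `y` lies outside `S` and is joined to infinity off `S` (its component in
the complement of `S` is infinite). -/
def toInfOff {d : ℕ} (S : Set (V d)) (y : V d) : Prop :=
  y ∉ S ∧ (compOff S y).Infinite

/-- `S ⊆ ℤ^d` is connected (as an induced subgraph of the lattice). -/
def IsLatConnected {d : ℕ} (S : Set (V d)) : Prop :=
  ∀ a ∈ S, ∀ b ∈ S, ReflTransGen (fun u v => latAdj u v ∧ u ∈ S ∧ v ∈ S) a b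

/-- `S` together with all its holes (the finite components of its complement). -/
def fillHoles {d : ℕ} (S : Set (V d)) : Set (V d) :=
  S ∪ {w | w ∉ S ∧ (compOff S w).Finite}

/-- We identify a plaquette with its dual edge, realized as an unordered pair of
adjacent lattice points.  `PiS S` is the set of plaquettes dual to edges
`⟨x,y⟩` with `x ∈ S` and `y ∉ S` joined to infinity off `S`. -/
def PiS {d : ℕ} (S : Set (V d)) : Set (Sym2 (V d)) :=
  {e | ∃ x y, latAdj x y ∧ x ∈ S ∧ toInfOff S y ∧ e = s(x, y)}

/-- The `i`-th unit coordinate vector. -/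
def uv {d : ℕ} (i : Fin d) : V d := fun k => if k = i then 1 else 0

/-- A unit square (2-facet) of `ℤ^d`; its dual is a `(d-2)`-facet of the dual
lattice `ℤ^d + (1/2,…,1/2)`. -/
structure Square (d : ℕ) where
  corner : V d
  i : Fin d
  j : Fin d
  hij : i ≠ j

/-- The four edges of a unit square.  A plaquette (identified with its dual
edge `e`) is incident to the `(d-2)`-facet dual to the square `F` exactly when
`e` is one of the four edges of `F`. -/
def edgesOf {d : ℕ} (F : Square d) : Set (Sym2 (V d)) :=
  {s(F.corner, F.corner + uv F.i), s(F.corner, F.corner + uv F.j),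
   s(F.corner + uv F.i, F.corner + uv F.i + uv F.j),
   s(F.corner + uv F.j, F.corner + uv F.i + uv F.j)}

/-- A set of plaquettes has empty boundary if every `(d-2)`-facet of the dual
lattice is incident to an even number of its members. -/
def NoBoundary {d : ℕ} (P : Set (Sym2 (V d))) : Prop :=
  ∀ F : Square d, Even (edgesOf F ∩ P).ncard

/-- Two plaquettes are adjacent if their intersection is a `(d-2)`-facet,
equivalently their dual edges are distinct edges of a common unit square. -/
def plaqAdj {d : ℕ} (e₁ e₂ : Sym2 (V d)) : Prop :=
  e₁ ≠ e₂ ∧ ∃ F : Square d, e₁ ∈ edgesOf F ∧ e₂ ∈ edgesOf F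

/-- A set of plaquettes is connected for the adjacency relation `plaqAdj`. -/
def PlaqConnected {d : ℕ} (P : Set (Sym2 (V d))) : Prop :=
  ∀ a ∈ P, ∀ b ∈ P, ReflTransGen (fun u v => plaqAdj u v ∧ u ∈ P ∧ v ∈ P) a b


lemma latAdj_symm' {d : ℕ} {x y : V d} (h : latAdj x y) : latAdj y x := by
  obtain ⟨i, h1, h2⟩ := h
  exact ⟨i, by omega, fun j hj => (h2 j hj).symm⟩

lemma connAvoid_symm' {d : ℕ} {S : Set (V d)} {a b : V d} (h : connAvoid S a b) :
    connAvoid S b a :=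
  letI : Std.Symm (fun u v : V d => latAdj u v ∧ u ∉ S ∧ v ∉ S) :=
    ⟨fun _ _ ⟨h1, h2, h3⟩ => ⟨latAdj_symm' h1, h3, h2⟩⟩
  ReflTransGen.symmetric.symm _ _ h

lemma notMem_fillHoles' {d : ℕ} {A : Set (V d)} {y b : V d}
    (hinf : (compOff A y).Infinite) (hb : b ∉ A) (h : connAvoid A y b) :
    b ∉ fillHoles A := by
  rintro (h1 | h1)
  · exact hb h1
  · exact (hinf.mono (fun w hw => (connAvoid_symm' h).trans hw)) h1.2

lemma connAvoid_fillHoles' {d : ℕ} {A : Set (V d)} {y : V d} (hy : y ∉ A)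
    (hinf : (compOff A y).Infinite) {z : V d} (h : connAvoid A y z) :
    connAvoid (fillHoles A) y z := by
  induction h with
  | refl => exact ReflTransGen.refl
  | tail h1 h2 ih =>
    exact ih.tail ⟨h2.1, notMem_fillHoles' hinf h2.2.1 h1,
      notMem_fillHoles' hinf h2.2.2 (h1.tail h2)⟩

/-- For a finite connected `A ⊆ ℤ^d`, the plaquette set `Π(A-bar)` of the
filled set equals the set of all plaquettes dual to edges having exactly one
endvertex in `A-bar`. -/
theorem PiS_fillHoles_eq_all_boundary_edges (d : ℕ) (hd : 2 ≤ d) (A : Set (V d))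
    (hfin : A.Finite) (hconn : IsLatConnected A) :
    PiS (fillHoles A) =
      {e | ∃ x y, latAdj x y ∧ x ∈ fillHoles A ∧ y ∉ fillHoles A ∧ e = s(x, y)} := by
  ext e
  simp only [PiS, Set.mem_setOf_eq]
  constructor
  · rintro ⟨x, y, hadj, hx, ⟨hy, _⟩, rfl⟩
    exact ⟨x, y, hadj, hx, hy, rfl⟩
  · rintro ⟨x, y, hadj, hx, hy, rfl⟩
    have hyA : y ∉ A := fun h => hy (Or.inl h)
    have hinf : (compOff A y).Infinite := by
      by_contra hfin
      exact hy (Or.inr ⟨hyA, Set.not_infinite.mp hfin⟩)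
    exact ⟨x, y, hadj, hx, ⟨hy,
      hinf.mono fun z hz => connAvoid_fillHoles' hyA hinf hz⟩, rfl⟩
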